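/- Assume Hypotheses 1 and 2 and let U_0 : O_d → ℝ^d be continuous. Then every C^1 classical solution of the time-dependent master equation with initial datum U_0 is a monotone solution of the time-dependent master equation with initial datum U_0. -/

import Mathlib

open scoped RealInnerProductSpace
noncomputable section

/-- `ℝ^d` with the Euclidean inner product. -/
abbrev Euc (d : ℕ) := EuclideanSpace ℝ (Fin d)

/-- The positive orthant `O_d = (ℝ≥0)^d`. -/
def Od (d : ℕ) : Set (Euc d) := {x | ∀ i, 0 ≤ x i}

/-- `B_R = {x ∈ O_d : x_1 + ... + x_d ≤ R}`. -/
def Ball1 (d : ℕ) (R : ℝ) : Set (Euc d) := {x | x ∈ Od d ∧ ∑ i, x i ≤ R}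

/-- Classical solution of the time dependent master equation with initial datum `U₀`. -/
def IsClassicalSolTD (d : ℕ) (F G : Euc d → Euc d → Euc d) (lam : ℝ)
    (T : Euc d →L[ℝ] Euc d) (U₀ : Euc d → Euc d) (U : ℝ → Euc d → Euc d) : Prop :=
  ContDiff ℝ 1 (fun q : ℝ × Euc d => U q.1 q.2) ∧
  (∀ x ∈ Od d, U 0 x = U₀ x) ∧
  ∀ t > (0:ℝ), ∀ x ∈ Od d, ∀ i,
    deriv (fun s : ℝ => U s x i) t
      + fderiv ℝ (fun z : Euc d => U t z i) x (F x (U t x))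
      + lam * (U t x i - ContinuousLinearMap.adjoint T (U t (T x)) i)
      = G x (U t x) i

/-- The defining inequality of a monotone solution of the time-dependent master equation with
data `(F, G)` and threshold `R₁` (Definition 2.2). -/
def MonSolPropTD (d : ℕ) (F G : Euc d → Euc d → Euc d) (lam : ℝ)
    (T : Euc d →L[ℝ] Euc d) (R₁ : ℝ) (U : ℝ → Euc d → Euc d) : Prop :=
  ∀ R ≥ R₁, ∀ V : Euc d, ∀ y ∈ Od d, ∀ t₀ > (0:ℝ), ∀ x₀ ∈ Ball1 d R,
    (∀ x ∈ Ball1 d R, x ≠ x₀ → ⟪U t₀ x₀ - V, x₀ - y⟫ < ⟪U t₀ x - V, x - y⟫) →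
    ∀ φ : ℝ → ℝ, ContDiff ℝ 1 φ →
      (∃ ε > (0:ℝ), ∀ t ∈ Set.Ioo (t₀ - ε) t₀, φ t < ⟪U t x₀, x₀ - y⟫) →
      φ t₀ = ⟪U t₀ x₀, x₀ - y⟫ →
      ⟪F x₀ (U t₀ x₀), U t₀ x₀ - V⟫ + ⟪G x₀ (U t₀ x₀), x₀ - y⟫ ≤
        deriv φ t₀
          + lam * ⟪U t₀ x₀ - ContinuousLinearMap.adjoint T (U t₀ (T x₀)), x₀ - y⟫

/-- Monotone solution of the time-dependent master equation with initial datum `U₀`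
(Definition 2.2), with threshold `R₁ ≥ R₀` where `R₀` is the constant of Hypothesis 2. -/
def IsMonotoneSolTD (d : ℕ) (F G : Euc d → Euc d → Euc d) (lam : ℝ)
    (T : Euc d →L[ℝ] Euc d) (U₀ : Euc d → Euc d) (R₀ : ℝ) (U : ℝ → Euc d → Euc d) : Prop :=
  ContinuousOn (fun q : ℝ × Euc d => U q.1 q.2) (Set.Ici 0 ×ˢ Od d) ∧
  (∀ x ∈ Od d, U 0 x = U₀ x) ∧
  ∃ R₁ ≥ R₀, MonSolPropTD d F G lam T R₁ U

set_option maxHeartbeats 1000000 in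
/-- Proposition 2.4 (first part): under Hypotheses 1 and 2, every C¹ classical solution of the
time-dependent master equation is a monotone solution of it. -/
theorem classical_implies_monotone_time_dependent
    (d : ℕ) (hd : 1 ≤ d)
    (F G : Euc d → Euc d → Euc d)
    (hFc : Continuous fun q : Euc d × Euc d => F q.1 q.2)
    (hGc : Continuous fun q : Euc d × Euc d => G q.1 q.2)
    (lam : ℝ) (hlam : 0 ≤ lam) (T : Euc d →L[ℝ] Euc d)
    -- Hypothesis 1
    (hyp1F : ∀ x ∈ Od d, ∀ p : Euc d, ∀ i, x i = 0 → F x p i ≤ 0)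
    (hyp1T : ∀ x ∈ Od d, T x ∈ Od d)
    -- Hypothesis 2
    (R₀ : ℝ) (hR₀ : 0 < R₀)
    (hyp2F : ∀ x ∈ Od d, ∀ p : Euc d, R₀ ≤ ∑ i, x i → 0 ≤ ∑ i, F x p i)
    (hyp2T : ∀ R ≥ R₀, ∀ x ∈ Ball1 d R, T x ∈ Ball1 d R)
    -- initial datum
    (U₀ : Euc d → Euc d) (hU₀c : ContinuousOn U₀ (Od d))
    (U : ℝ → Euc d → Euc d) (hU : IsClassicalSolTD d F G lam T U₀ U) :
    IsMonotoneSolTD d F G lam T U₀ R₀ U := by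
  obtain ⟨hC1, hInit, hPDE⟩ := hU
  refine ⟨hC1.continuous.continuousOn, hInit, R₀, le_rfl, ?_⟩
  intro R hR V y hy t₀ ht₀ x₀ hx₀ hmin φ hφ hφlt hφeq
  have hinner : ∀ a b : Euc d, ⟪a, b⟫ = ∑ i, a i * b i := by
    intro a b; rw [PiLp.inner_apply]; simp [RCLike.inner_apply]
    exact Finset.sum_congr rfl fun i _ => mul_comm _ _
  set u := U t₀ x₀ with hu
  set Fv := F x₀ u with hFvdef
  set A := ContinuousLinearMap.adjoint T (U t₀ (T x₀)) with hAdef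
  have hx₀Od : x₀ ∈ Od d := hx₀.1
  have hUi : ∀ i : Fin d, Differentiable ℝ (fun q : ℝ × Euc d => U q.1 q.2 i) := by
    intro i
    have := (EuclideanSpace.proj (𝕜 := ℝ) i).differentiable.comp (hC1.differentiable one_ne_zero)
    exact this
  set Di : Fin d → (ℝ × Euc d →L[ℝ] ℝ) :=
    fun i => fderiv ℝ (fun q : ℝ × Euc d => U q.1 q.2 i) (t₀, x₀) with hDidef
  have hDi : ∀ i, HasFDerivAt (fun q : ℝ × Euc d => U q.1 q.2 i) (Di i) (t₀, x₀) :=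
    fun i => (hUi i (t₀, x₀)).hasFDerivAt
  have ha : ∀ i, HasDerivAt (fun s : ℝ => U s x₀ i) (Di i (1, 0)) t₀ := by
    intro i
    have hcurve : HasDerivAt (fun s : ℝ => ((s, x₀) : ℝ × Euc d)) ((1 : ℝ), (0 : Euc d)) t₀ :=
      (hasDerivAt_id t₀).prodMk (hasDerivAt_const t₀ x₀)
    exact (hDi i).comp_hasDerivAt t₀ hcurve
  have hb : ∀ i, HasFDerivAt (fun z : Euc d => U t₀ z i)
      ((Di i).comp (ContinuousLinearMap.inr ℝ ℝ (Euc d))) x₀ :=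
    fun i => (hDi i).comp x₀ (hasFDerivAt_prodMk_right t₀ x₀)
  have hpde : ∀ i, Di i (1, 0) + Di i (0, Fv) + lam * (u i - A i) = G x₀ u i := by
    intro i
    have h := hPDE t₀ ht₀ x₀ hx₀Od i
    rw [(ha i).deriv, (hb i).fderiv] at h
    simpa [ContinuousLinearMap.comp_apply, ContinuousLinearMap.inr_apply] using h
  -- Claim 1
  have hφ' : HasDerivAt φ (deriv φ t₀) t₀ := (hφ.differentiable one_ne_zero t₀).hasDerivAt
  have claim1 : ∑ i, Di i (1, 0) * (x₀ i - y i) ≤ deriv φ t₀ := by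
    obtain ⟨ε, hε, hlt⟩ := hφlt
    set ψ : ℝ → ℝ := fun t => (∑ i, U t x₀ i * (x₀ i - y i)) - φ t with hψdef
    have hw : HasDerivAt (fun t : ℝ => ∑ i, U t x₀ i * (x₀ i - y i))
        (∑ i, Di i (1, 0) * (x₀ i - y i)) t₀ :=
      HasDerivAt.fun_sum fun i _ => (ha i).mul_const _
    have hψ : HasDerivAt ψ ((∑ i, Di i (1, 0) * (x₀ i - y i)) - deriv φ t₀) t₀ := hw.sub hφ'
    have hφt₀ : φ t₀ = ∑ i, u i * (x₀ i - y i) := by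
      rw [hφeq, hinner]
      exact Finset.sum_congr rfl fun i _ => rfl
    have hψ0 : ψ t₀ = 0 := by
      simp only [hψdef]
      rw [sub_eq_zero]
      exact hφt₀.symm
    have hsub : Set.Iio t₀ ⊆ {t₀}ᶜ := fun s hs => ne_of_lt hs
    have htend := (hasDerivAt_iff_tendsto_slope.mp hψ).mono_left (nhdsWithin_mono t₀ hsub)
    have hIoo : Set.Ioo (t₀ - ε) t₀ ∈ nhdsWithin t₀ (Set.Iio t₀) :=
      Ioo_mem_nhdsLT_of_mem ⟨by linarith, le_rfl⟩
    have hev : ∀ᶠ t in nhdsWithin t₀ (Set.Iio t₀), slope ψ t₀ t ≤ 0 := by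
      filter_upwards [hIoo] with t ht
      have h3 : φ t < ∑ i, U t x₀ i * (x₀ i - y i) := by
        have h4 := hlt t ht
        rw [hinner] at h4
        exact h4
      have h1 : 0 < ψ t := by simp only [hψdef]; linarith
      have hsl : slope ψ t₀ t = ψ t / (t - t₀) := by
        rw [slope_def_field, hψ0, sub_zero]
      rw [hsl]
      exact div_nonpos_of_nonneg_of_nonpos h1.le (by linarith [ht.2])
    have hle := le_of_tendsto htend hev
    linarith
  -- Claim 2
  have claim2 : ∑ i, Di i (0, Fv) * (x₀ i - y i) + ∑ i, (u i - V i) * Fv i ≤ 0 := by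
    have hc : HasDerivAt (fun s : ℝ => x₀ - s • Fv) (-Fv) 0 := by
      simpa using ((hasDerivAt_id (0 : ℝ)).smul_const Fv).const_sub x₀
    have hc0 : x₀ - (0 : ℝ) • Fv = x₀ := by simp
    have h3 : ∀ i : Fin d, HasDerivAt
        (fun s : ℝ => (U t₀ (x₀ - s • Fv) i - V i) * ((x₀ - s • Fv) i - y i))
        (-(Di i (0, Fv)) * (x₀ i - y i) + (u i - V i) * (-Fv i)) 0 := by
      intro i
      have hb' : HasFDerivAt (fun z : Euc d => U t₀ z i)
          ((Di i).comp (ContinuousLinearMap.inr ℝ ℝ (Euc d))) (x₀ - (0 : ℝ) • Fv) := by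
        rw [hc0]; exact hb i
      have h1 : HasDerivAt (fun s : ℝ => U t₀ (x₀ - s • Fv) i - V i)
          (-(Di i (0, Fv))) 0 := by
        have h5 := (hb'.comp_hasDerivAt 0 hc).sub_const (V i)
        have heq : ((Di i).comp (ContinuousLinearMap.inr ℝ ℝ (Euc d))) (-Fv)
            = -(Di i (0, Fv)) := by
          have hpair : (((0 : ℝ), -Fv) : ℝ × Euc d) = -(((0 : ℝ), Fv) : ℝ × Euc d) := by
            simp [Prod.ext_iff]
          simp only [ContinuousLinearMap.comp_apply, ContinuousLinearMap.inr_apply, hpair,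
            map_neg]
        rwa [heq] at h5
      have h2 : HasDerivAt (fun s : ℝ => (x₀ - s • Fv) i - y i) (-Fv i) 0 := by
        have h6 : HasDerivAt (fun s : ℝ => (x₀ i - s * Fv i) - y i) (-Fv i) 0 := by
          simpa using (((hasDerivAt_id (0 : ℝ)).mul_const (Fv i)).const_sub (x₀ i)).sub_const (y i)
        exact h6
      have h7 := h1.mul h2
      have e1 : (x₀ - (0 : ℝ) • Fv) i - y i = x₀ i - y i := by rw [hc0]
      have e2 : U t₀ (x₀ - (0 : ℝ) • Fv) i - V i = u i - V i := by rw [hc0]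
      rwa [e1, e2] at h7
    set g : ℝ → ℝ :=
      fun s => ∑ i, (U t₀ (x₀ - s • Fv) i - V i) * ((x₀ - s • Fv) i - y i) with hgdef
    have hg : HasDerivAt g
        (∑ i, (-(Di i (0, Fv)) * (x₀ i - y i) + (u i - V i) * (-Fv i))) 0 :=
      HasDerivAt.fun_sum fun i _ => h3 i
    -- eventual membership in the ball
    have hmemcoord : ∀ᶠ s in nhdsWithin (0 : ℝ) (Set.Ioi 0),
        ∀ i : Fin d, 0 ≤ (x₀ - s • Fv) i := by
      rw [Filter.eventually_all]
      intro i
      rcases le_or_gt (Fv i) 0 with hle | hgt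
      · filter_upwards [self_mem_nhdsWithin] with s hs
        have he : (x₀ - s • Fv) i = x₀ i - s * Fv i := rfl
        rw [he]
        nlinarith [hx₀Od i, Set.mem_Ioi.1 hs]
      · have hx0pos : 0 < x₀ i := by
          rcases (hx₀Od i).lt_or_eq with h | h
          · exact h
          · exact absurd (hyp1F x₀ hx₀Od u i h.symm) (by rw [← hFvdef]; linarith)
        filter_upwards [Ioo_mem_nhdsGT_of_mem
          (Set.mem_Ico.2 ⟨le_rfl, div_pos hx0pos hgt⟩)] with s hs
        have he : (x₀ - s • Fv) i = x₀ i - s * Fv i := rfl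
        rw [he]
        have h8 := (lt_div_iff₀ hgt).mp hs.2
        linarith
    have hmemsum : ∀ᶠ s in nhdsWithin (0 : ℝ) (Set.Ioi 0), ∑ i, (x₀ - s • Fv) i ≤ R := by
      have hsumeq : ∀ s : ℝ, ∑ i, (x₀ - s • Fv) i = (∑ i, x₀ i) - s * ∑ i, Fv i := by
        intro s
        rw [Finset.mul_sum, ← Finset.sum_sub_distrib]
        exact Finset.sum_congr rfl fun i _ => rfl
      rcases le_or_gt 0 (∑ i, Fv i) with hpos | hneg
      · filter_upwards [self_mem_nhdsWithin] with s hs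
        rw [hsumeq]
        nlinarith [hx₀.2, Set.mem_Ioi.1 hs]
      · have hlt : ∑ i, x₀ i < R₀ := by
          by_contra hcon
          push_neg at hcon
          exact absurd (hyp2F x₀ hx₀Od u hcon) (by rw [← hFvdef]; linarith)
        have hltR : ∑ i, x₀ i < R := lt_of_lt_of_le hlt hR
        filter_upwards [Ioo_mem_nhdsGT_of_mem
          (Set.mem_Ico.2 ⟨le_rfl, div_pos (by linarith : (0:ℝ) < R - ∑ i, x₀ i)
            (by linarith : (0:ℝ) < -(∑ i, Fv i))⟩)] with s hs
        rw [hsumeq]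
        have h9 := (lt_div_iff₀ (by linarith : (0:ℝ) < -(∑ i, Fv i))).mp hs.2
        nlinarith [hs.1]
    have hmem : ∀ᶠ s in nhdsWithin (0 : ℝ) (Set.Ioi 0), x₀ - s • Fv ∈ Ball1 d R := by
      filter_upwards [hmemcoord, hmemsum] with s h1 h2
      exact ⟨fun i => h1 i, h2⟩
    -- g s ≥ g 0 eventually
    have hg0 : g 0 = ∑ i, (u i - V i) * (x₀ i - y i) := by
      simp only [hgdef]
      rw [hc0]
    have hgev : ∀ᶠ s in nhdsWithin (0 : ℝ) (Set.Ioi 0), g 0 ≤ g s := by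
      filter_upwards [hmem] with s hs
      rcases eq_or_ne (x₀ - s • Fv) x₀ with heq | hne
      · simp only [hgdef]
        rw [heq, hc0]
      · have h10 := hmin (x₀ - s • Fv) hs hne
        rw [hinner, hinner] at h10
        have h11 : g s = ∑ i, (U t₀ (x₀ - s • Fv) - V) i * ((x₀ - s • Fv) - y) i :=
          Finset.sum_congr rfl fun i _ => rfl
        have h12 : g 0 = ∑ i, (u - V) i * (x₀ - y) i :=
          hg0.trans (Finset.sum_congr rfl fun i _ => rfl)
        rw [h11, h12]
        exact h10.le
    have hsub2 : Set.Ioi (0:ℝ) ⊆ {(0:ℝ)}ᶜ :=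
      fun s hs => Set.mem_compl_singleton_iff.mpr (ne_of_gt hs)
    have htend2 := (hasDerivAt_iff_tendsto_slope.mp hg).mono_left (nhdsWithin_mono 0 hsub2)
    have hev2 : ∀ᶠ s in nhdsWithin (0 : ℝ) (Set.Ioi 0), 0 ≤ slope g 0 s := by
      filter_upwards [hgev, self_mem_nhdsWithin] with s hge hs
      have hsl : slope g 0 s = (g s - g 0) / s := by
        rw [slope_def_field, sub_zero]
      rw [hsl]
      exact div_nonneg (by linarith) (Set.mem_Ioi.1 hs).le
    have hD0 := ge_of_tendsto htend2 hev2
    have hsplit : ∑ i, (-(Di i (0, Fv)) * (x₀ i - y i) + (u i - V i) * (-Fv i))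
        = -(∑ i, Di i (0, Fv) * (x₀ i - y i)) - ∑ i, (u i - V i) * Fv i := by
      rw [Finset.sum_add_distrib]
      simp only [neg_mul, mul_neg, Finset.sum_neg_distrib]
      ring
    rw [hsplit] at hD0
    linarith
  -- conclusion
  rw [hinner, hinner, hinner]
  have hGsum : ∑ i, G x₀ u i * (x₀ i - y i)
      = (∑ i, Di i (1, 0) * (x₀ i - y i)) + (∑ i, Di i (0, Fv) * (x₀ i - y i))
        + lam * ∑ i, (u i - A i) * (x₀ i - y i) := by
    rw [Finset.mul_sum, ← Finset.sum_add_distrib, ← Finset.sum_add_distrib]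
    exact Finset.sum_congr rfl fun i _ => by rw [← hpde i]; ring
  have e1 : ∑ i, Fv i * (u - V) i = ∑ i, (u i - V i) * Fv i :=
    Finset.sum_congr rfl fun i _ => mul_comm _ _
  have e2 : ∑ i, G x₀ u i * (x₀ - y) i = ∑ i, G x₀ u i * (x₀ i - y i) :=
    Finset.sum_congr rfl fun i _ => rfl
  have e3 : ∑ i, (u - A) i * (x₀ - y) i = ∑ i, (u i - A i) * (x₀ i - y i) :=
    Finset.sum_congr rfl fun i _ => rfl
  rw [e1, e2, e3, hGsum]
  nlinarith [claim1, claim2, hlam]
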